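/- arXiv:1902.03703 — 4 statements merged into one kernel-verified Lean document; each statement's English description precedes it below -/
import Mathlib

section
/- Let W be a unitary operator on a finite-dimensional complex Hilbert space h, let ψ* be a unit vector that is cyclic for W (i.e., the span of {W^k ψ* : k ∈ ℕ} is all of h), let P be the orthogonal projection onto the span of ψ*, and let α ∈ ℝ with α not an integer multiple of π. Then the spectral radius of M := W(1 + (cos α − 1)P) is strictly less than 1. -/
open ContinuousLinearMap

private lemma stmt0_aux {a b q cc : ℝ} (ha : 0 ≤ a) (hb : 0 < b) (hq : 0 < q)
    (hc : cc ^ 2 < 1) (h : a ^ 2 * b ^ 2 = b ^ 2 + (cc ^ 2 - 1) * q ^ 2) : a < 1 := by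
  by_contra h1
  push_neg at h1
  have h2 : 1 ≤ a ^ 2 := by nlinarith
  have h3 : b ^ 2 ≤ a ^ 2 * b ^ 2 := le_mul_of_one_le_left (by positivity) h2
  nlinarith [mul_pos (sub_pos.mpr hc) (pow_pos hq 2)]

/-- If `W` is unitary on a finite-dimensional complex Hilbert space,
`ψ` is a unit cyclic vector for `W`, `P` the orthogonal projection onto `span ψ`,
and `α ∈ ℝ \ πℤ`, then `spr (W (1 + (cos α − 1) P)) < 1`. -/
theorem stmt0 {d : ℕ}
    (W : EuclideanSpace ℂ (Fin d) →L[ℂ] EuclideanSpace ℂ (Fin d))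
    (hW : W ∈ unitary (EuclideanSpace ℂ (Fin d) →L[ℂ] EuclideanSpace ℂ (Fin d)))
    (ψ : EuclideanSpace ℂ (Fin d)) (hψ : ‖ψ‖ = 1)
    (hcyc : Submodule.span ℂ {x | ∃ k : ℕ, x = (W ^ k) ψ} = ⊤)
    (α : ℝ) (hα : ∀ k : ℤ, α ≠ k * Real.pi) :
    spectralRadius ℂ
      (W * (1 + (((Real.cos α : ℂ)) - 1) • ((innerSL ℂ ψ).smulRight ψ))) < 1 := by
  classical
  set M : EuclideanSpace ℂ (Fin d) →L[ℂ] EuclideanSpace ℂ (Fin d) :=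
    W * (1 + (((Real.cos α : ℂ)) - 1) • ((innerSL ℂ ψ).smulRight ψ)) with hM
  set c : ℝ := Real.cos α with hcdef
  -- |cos α| < 1
  have hsin : Real.sin α ≠ 0 := by
    intro h
    obtain ⟨n, hn⟩ := Real.sin_eq_zero_iff.mp h
    exact hα n hn.symm
  have hc2 : c ^ 2 < 1 := by
    nlinarith [Real.sin_sq_add_cos_sq α, sq_pos_of_ne_zero hsin]
  -- every spectral value has norm < 1
  have key : ∀ z ∈ spectrum ℂ M, ‖z‖ < 1 := by
    intro z hz
    rw [spectrum.mem_iff, ContinuousLinearMap.isUnit_iff_bijective] at hz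
    -- extract an eigenvector
    have hinj : ¬ Function.Injective
        (algebraMap ℂ (EuclideanSpace ℂ (Fin d) →L[ℂ] EuclideanSpace ℂ (Fin d)) z - M) := by
      intro h
      exact hz ⟨h, (LinearMap.injective_iff_surjective
        (f := ((algebraMap ℂ (EuclideanSpace ℂ (Fin d) →L[ℂ] EuclideanSpace ℂ (Fin d)) z - M) :
          EuclideanSpace ℂ (Fin d) →ₗ[ℂ] EuclideanSpace ℂ (Fin d)))).mp h⟩
    obtain ⟨x, y, hxy, hne⟩ := Function.not_injective_iff.mp hinj
    set v : EuclideanSpace ℂ (Fin d) := x - y with hv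
    have hv0 : v ≠ 0 := sub_ne_zero.mpr hne
    have h0 : (algebraMap ℂ (EuclideanSpace ℂ (Fin d) →L[ℂ] EuclideanSpace ℂ (Fin d)) z - M) v
        = 0 := by
      rw [hv, map_sub, hxy, sub_self]
    have hMv : M v = z • v := by
      rw [ContinuousLinearMap.sub_apply, sub_eq_zero] at h0
      rw [← h0, Algebra.algebraMap_eq_smul_one]
      simp
    set p : ℂ := (inner ℂ ψ v : ℂ) with hp
    have hMv' : M v = W (v + ((c : ℂ) - 1) • (p • ψ)) := by
      simp [hM, ContinuousLinearMap.mul_apply, ContinuousLinearMap.add_apply,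
        ContinuousLinearMap.smul_apply, ContinuousLinearMap.smulRight_apply,
        innerSL_apply_apply, hp]
    have hvpos : (0:ℝ) < ‖v‖ := norm_pos_iff.mpr hv0
    -- the norm identity
    have hnorm : ‖z‖ ^ 2 * ‖v‖ ^ 2 = ‖v‖ ^ 2 + (c ^ 2 - 1) * ‖p‖ ^ 2 := by
      have h1 : ‖M v‖ = ‖z‖ * ‖v‖ := by rw [hMv, norm_smul]
      have h2 : ‖M v‖ = ‖v + ((c : ℂ) - 1) • (p • ψ)‖ := by
        rw [hMv', ContinuousLinearMap.norm_map_of_mem_unitary hW]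
      have h3 : ‖v + ((c : ℂ) - 1) • (p • ψ)‖ ^ 2
          = ‖v‖ ^ 2 + (c ^ 2 - 1) * ‖p‖ ^ 2 := by
        rw [@norm_add_sq ℂ]
        have hinner : (inner ℂ v (((c : ℂ) - 1) • (p • ψ)) : ℂ)
            = ((c : ℂ) - 1) * (p * (starRingEnd ℂ) p) := by
          rw [inner_smul_right, inner_smul_right, ← inner_conj_symm, ← hp]
        have hre : RCLike.re (inner ℂ v (((c : ℂ) - 1) • (p • ψ)) : ℂ)
            = (c - 1) * ‖p‖ ^ 2 := by
          rw [hinner, Complex.mul_conj',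
            show ((c : ℂ) - 1) = ((c - 1 : ℝ) : ℂ) by push_cast; ring,
            ← Complex.ofReal_pow, ← Complex.ofReal_mul]
          exact Complex.ofReal_re _
        have hn2 : ‖((c : ℂ) - 1) • (p • ψ)‖ ^ 2 = (c - 1) ^ 2 * ‖p‖ ^ 2 := by
          rw [norm_smul, norm_smul, hψ, mul_one,
            show ((c : ℂ) - 1) = ((c - 1 : ℝ) : ℂ) by push_cast; ring,
            Complex.norm_real, Real.norm_eq_abs, mul_pow, sq_abs]
        rw [hre, hn2]
        ring
      have h4 := h3
      rw [← h2, h1] at h4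
      calc ‖z‖ ^ 2 * ‖v‖ ^ 2 = (‖z‖ * ‖v‖) ^ 2 := by ring
        _ = ‖v‖ ^ 2 + (c ^ 2 - 1) * ‖p‖ ^ 2 := h4
    by_cases hp0 : p = 0
    · -- then W v = z v, |z| = 1, contradicts cyclicity
      exfalso
      have hWv : W v = z • v := by
        rw [← hMv, hMv', hp0]
        simp
      have hz2 : ‖z‖ ^ 2 = 1 := by
        rw [hp0] at hnorm
        simp only [norm_zero] at hnorm
        have hnorm' : ‖z‖ ^ 2 * ‖v‖ ^ 2 = 1 * ‖v‖ ^ 2 := by rw [hnorm]; ring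
        exact mul_right_cancel₀ (by positivity) hnorm'
      have hz0 : z ≠ 0 := by
        intro h
        rw [h] at hz2
        simp at hz2
      have hadj : ContinuousLinearMap.adjoint W v = z⁻¹ • v := by
        have h1 : ContinuousLinearMap.adjoint W (W v) = v := by
          have hs := Unitary.star_mul_self_of_mem hW
          calc ContinuousLinearMap.adjoint W (W v)
              = (star W * W) v := by
                rw [ContinuousLinearMap.star_eq_adjoint, ContinuousLinearMap.mul_apply]
            _ = v := by rw [hs]; simp
        rw [hWv, map_smul] at h1
        exact (eq_inv_smul_iff₀ hz0).mpr h1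
      have hk : ∀ k : ℕ, (inner ℂ ((W ^ k) ψ) v : ℂ) = 0 := by
        intro k
        induction k with
        | zero =>
          simp only [pow_zero, ContinuousLinearMap.one_apply]
          exact hp0
        | succ k ih =>
          have hpow : (W ^ (k+1)) ψ = W ((W ^ k) ψ) := by
            rw [pow_succ', ContinuousLinearMap.mul_apply]
          rw [hpow, ← ContinuousLinearMap.adjoint_inner_right, hadj,
            inner_smul_right, ih, mul_zero]
      have hvbot : v ∈ (Submodule.span ℂ
          {x : EuclideanSpace ℂ (Fin d) | ∃ k : ℕ, x = (W ^ k) ψ})ᗮ := by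
        rw [Submodule.mem_orthogonal]
        intro u hu
        refine Submodule.span_induction ?_ ?_ ?_ ?_ hu
        · rintro w ⟨k, rfl⟩; exact hk k
        · simp
        · intro a b _ _ ha hb; rw [inner_add_left, ha, hb, add_zero]
        · intro r a _ ha; rw [inner_smul_left, ha, mul_zero]
      rw [hcyc, Submodule.top_orthogonal_eq_bot] at hvbot
      exact hv0 (by simpa using hvbot)
    · -- strict contraction
      have hppos : (0:ℝ) < ‖p‖ := norm_pos_iff.mpr hp0
      exact stmt0_aux (norm_nonneg z) hvpos hppos hc2 hnorm
  -- conclude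
  rcases subsingleton_or_nontrivial (EuclideanSpace ℂ (Fin d)) with hsub | hnt
  · have he : spectrum ℂ M = ∅ := by
      ext w
      simp [spectrum.mem_iff, isUnit_of_subsingleton]
    have h0 : spectralRadius ℂ M = 0 := by
      simp [spectralRadius, he]
    rw [h0]
    norm_num
  · have hne : (spectrum ℂ M).Nonempty := spectrum.nonempty M
    refine spectrum.spectralRadius_lt_of_forall_lt_of_nonempty hne ?_
    intro k hk
    exact_mod_cast key k hk
end

section
/- Let W be a unitary on a finite-dimensional complex Hilbert space h, ψ* ∈ h a unit vector, P the orthogonal projection onto span{ψ*}, α ∈ ℝ \ πℤ, and M = W(1 + (cos α − 1)P). If x ∈ h is an eigenvector of M with eigenvalue λ satisfying |λ| = 1, then Px = 0 and x is an eigenvector of W orthogonal to ψ*. In particular, if ψ* is cyclic for W then M has no eigenvalue of modulus 1. -/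
open ContinuousLinearMap

/-- If `x` is an eigenvector of `M = W(1 + (cos α − 1)P)` (with `α ∉ πℤ`)
for an eigenvalue of modulus one, then `P x = 0`, `x` is an eigenvector of `W` and
`x ⊥ ψ*`; in particular if `ψ*` is cyclic for `W` then `M` has no eigenvalue of
modulus one. -/
theorem stmt3 {d : ℕ}
    (W : EuclideanSpace ℂ (Fin d) →L[ℂ] EuclideanSpace ℂ (Fin d))
    (hW : W ∈ unitary (EuclideanSpace ℂ (Fin d) →L[ℂ] EuclideanSpace ℂ (Fin d)))
    (ψ : EuclideanSpace ℂ (Fin d)) (hψ : ‖ψ‖ = 1)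
    (P : EuclideanSpace ℂ (Fin d) →L[ℂ] EuclideanSpace ℂ (Fin d))
    (hP : P = (innerSL ℂ ψ).smulRight ψ)
    (α : ℝ) (hα : ∀ k : ℤ, α ≠ k * Real.pi)
    (M : EuclideanSpace ℂ (Fin d) →L[ℂ] EuclideanSpace ℂ (Fin d))
    (hM : M = W * (1 + (((Real.cos α : ℂ)) - 1) • P)) :
    (∀ (x : EuclideanSpace ℂ (Fin d)) (lam : ℂ), x ≠ 0 → M x = lam • x → ‖lam‖ = 1 →
        P x = 0 ∧ W x = lam • x ∧ (inner ℂ ψ x : ℂ) = 0) ∧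
      (Submodule.span ℂ {y | ∃ k : ℕ, y = (W ^ k) ψ} = ⊤ →
        ∀ lam : ℂ, ‖lam‖ = 1 → ¬∃ x : EuclideanSpace ℂ (Fin d), x ≠ 0 ∧ M x = lam • x) := by
  have hsin : Real.sin α ≠ 0 := by
    rw [Real.sin_ne_zero_iff]
    intro n
    exact (hα n).symm
  have key : ∀ (x : EuclideanSpace ℂ (Fin d)) (lam : ℂ), x ≠ 0 → M x = lam • x → ‖lam‖ = 1 →
      P x = 0 ∧ W x = lam • x ∧ (inner ℂ ψ x : ℂ) = 0 := by
    intro x lam hx hMx hlam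
    set c : ℂ := inner ℂ ψ x with hc
    set t : ℂ := ((Real.cos α : ℂ)) - 1 with ht
    have hPx : P x = c • ψ := by
      rw [hP]; rfl
    have hMx' : M x = W (x + (t * c) • ψ) := by
      rw [hM]
      simp only [ContinuousLinearMap.mul_apply, ContinuousLinearMap.add_apply, ContinuousLinearMap.one_apply, ContinuousLinearMap.smul_apply, hPx, smul_smul]
    -- norm computation
    have hnorm : ‖x + (t * c) • ψ‖ = ‖x‖ := by
      have h1 : ‖W (x + (t * c) • ψ)‖ = ‖x + (t * c) • ψ‖ :=
        W.norm_map_of_mem_unitary hW _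
      have h2 : ‖M x‖ = ‖x‖ := by
        rw [hMx, norm_smul, hlam, one_mul]
      rw [hMx', h1] at h2
      exact h2
    have hxψ : (inner ℂ x ψ : ℂ) = (starRingEnd ℂ) c := by
      rw [hc, ← inner_conj_symm]
    have hre : (inner ℂ x ((t * c) • ψ) : ℂ) = t * c * (starRingEnd ℂ) c := by
      rw [inner_smul_right, hxψ]
    have hexp : ‖x + (t * c) • ψ‖ ^ 2 = ‖x‖ ^ 2 + 2 * (t * c * (starRingEnd ℂ) c).re
        + ‖t * c‖ ^ 2 := by
      have h6 := @norm_add_sq ℂ _ _ _ _ x ((t * c) • ψ)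
      rw [hre, norm_smul, hψ, mul_one, RCLike.re_to_complex] at h6
      exact_mod_cast h6
    have hnorm2 : ‖x‖ ^ 2 = ‖x‖ ^ 2 + 2 * (t * c * (starRingEnd ℂ) c).re + ‖t * c‖ ^ 2 := by
      rw [← hexp, hnorm]
    -- t is real: t = cos α - 1
    have htre : t * c * (starRingEnd ℂ) c = t * (‖c‖ : ℂ) ^ 2 := by
      rw [mul_assoc, Complex.mul_conj']
    have hzero : (Real.cos α - 1) * ‖c‖ ^ 2 * 2 + (Real.cos α - 1) ^ 2 * ‖c‖ ^ 2 = 0 := by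
      have := hnorm2
      rw [htre] at this
      have hre2 : (t * (‖c‖ : ℂ) ^ 2).re = (Real.cos α - 1) * ‖c‖ ^ 2 := by
        have h5 : t * (‖c‖ : ℂ) ^ 2 = (((Real.cos α - 1) * ‖c‖ ^ 2 : ℝ) : ℂ) := by
          rw [ht]; push_cast; ring
        rw [h5, Complex.ofReal_re]
      have hnt : ‖t * c‖ ^ 2 = (Real.cos α - 1) ^ 2 * ‖c‖ ^ 2 := by
        rw [norm_mul, mul_pow]
        congr 1
        rw [ht]
        have : ((Real.cos α : ℂ)) - 1 = ((Real.cos α - 1 : ℝ) : ℂ) := by push_cast; ring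
        rw [this, Complex.norm_real, Real.norm_eq_abs, sq_abs]
      rw [hre2, hnt] at this
      linarith
    have hfac : (Real.cos α - 1) * ‖c‖ ^ 2 * 2 + (Real.cos α - 1) ^ 2 * ‖c‖ ^ 2
        = -(Real.sin α ^ 2) * ‖c‖ ^ 2 := by
      have := Real.sin_sq_add_cos_sq α
      nlinarith [this]
    have hczero : c = 0 := by
      have h3 : Real.sin α ^ 2 * ‖c‖ ^ 2 = 0 := by
        rw [hfac] at hzero; linarith
      have h4 : ‖c‖ ^ 2 = 0 := by
        rcases mul_eq_zero.mp h3 with h | h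
        · exact absurd (pow_eq_zero_iff (by norm_num) |>.mp h) hsin
        · exact h
      simpa using pow_eq_zero_iff (n := 2) (by norm_num) |>.mp h4
    have hPx0 : P x = 0 := by rw [hPx, hczero, zero_smul]
    refine ⟨hPx0, ?_, hczero⟩
    have : M x = W x := by
      rw [hMx', hczero]
      simp
    rw [← this, hMx]
  refine ⟨key, ?_⟩
  intro hspan lam hlam ⟨x, hx, hMx⟩
  obtain ⟨hPx, hWx, hcx⟩ := key x lam hx hMx hlam
  have hlam0 : lam ≠ 0 := by
    intro h; rw [h] at hlam; simp at hlam
  -- inner (W^k ψ) x = 0 for all k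
  have horth : ∀ k : ℕ, (inner ℂ ((W ^ k) ψ) x : ℂ) = 0 := by
    intro k
    induction k with
    | zero => simpa using hcx
    | succ n ih =>
      have : (inner ℂ ((W ^ (n + 1)) ψ) x : ℂ) = (inner ℂ (W ((W ^ n) ψ)) (W x) : ℂ) * lam⁻¹ := by
        rw [hWx, inner_smul_right, pow_succ', ContinuousLinearMap.mul_apply]
        field_simp
      rw [this, W.inner_map_map_of_mem_unitary hW, ih, zero_mul]
  -- x is orthogonal to a spanning set, hence zero
  have hxmem : x ∈ (Submodule.span ℂ {y | ∃ k : ℕ, y = (W ^ k) ψ})ᗮ := by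
    rw [Submodule.mem_orthogonal]
    intro u hu
    refine Submodule.span_induction ?_ ?_ ?_ ?_ hu
    · rintro y ⟨k, rfl⟩; exact horth k
    · simp
    · intro a b _ _ ha hb; rw [inner_add_left, ha, hb, add_zero]
    · intro r a _ ha; rw [inner_smul_left, ha, mul_zero]
  rw [hspan, Submodule.top_orthogonal_eq_bot, Submodule.mem_bot] at hxmem
  exact hx hxmem
end

section
/- Let M be a square complex matrix with ‖M‖ ≤ 1 and spectral radius < 1, let W be unitary with M = W(1 + (cos α − 1)P) for a rank-one orthogonal projection P, and let (c_k)_{k∈ℤ} be complex coefficients with c_{−k} = conj(c_k) and Σ_k |c_k| < ∞. Then the double series Σ_{s',t'=1}^∞ c_{s'−t'} sin²α · M^{t'−1} W P W* (M*)^{s'−1} converges absolutely in operator norm and equals c_0·1 + Σ_{ℓ=1}^∞ c_ℓ (M*)^ℓ + Σ_{ℓ=1}^∞ conj(c_ℓ) M^ℓ, i.e. 2 Re F(M*) where F(ζ) = c_0/2 + Σ_{ℓ≥1} c_ℓ ζ^ℓ. -/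
open ContinuousLinearMap

open Filter Topology
open scoped ENNReal NNReal

set_option maxHeartbeats 1000000

section Aux

-- geometric decay from spectral radius < 1
private lemma aux_decay {A : Type*} [NormedRing A] [NormedAlgebra ℂ A] [CompleteSpace A] {a : A}
    (h : spectralRadius ℂ a < 1) :
    ∃ C r : ℝ, 0 ≤ C ∧ 0 ≤ r ∧ r < 1 ∧ ∀ n : ℕ, ‖a ^ n‖ ≤ C * r ^ n := by
  obtain ⟨r, hr1, hr2⟩ := ENNReal.lt_iff_exists_nnreal_btwn.mp h
  have htd := spectrum.pow_nnnorm_pow_one_div_tendsto_nhds_spectralRadius a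
  have hev : ∀ᶠ n : ℕ in atTop, (‖a ^ n‖₊ : ℝ≥0∞) ^ (1 / n : ℝ) < (r : ℝ≥0∞) :=
    htd.eventually_lt_const hr1
  obtain ⟨N, hN⟩ := hev.exists_forall_of_atTop
  set r0 : ℝ := max (r : ℝ) (1 / 2) with hr0
  have hr0pos : 0 < r0 := lt_of_lt_of_le (by norm_num) (le_max_right _ _)
  have hr0lt : r0 < 1 := by
    have : (r : ℝ) < 1 := by exact_mod_cast hr2
    exact max_lt this (by norm_num)
  have key : ∀ n : ℕ, N + 1 ≤ n → ‖a ^ n‖ ≤ r0 ^ n := by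
    intro n hn
    have hn1 : 1 ≤ n := le_trans (Nat.le_add_left 1 N) hn
    have h1 : (‖a ^ n‖₊ : ℝ≥0∞) ^ (1 / n : ℝ) < (r : ℝ≥0∞) := hN n (le_trans (Nat.le_succ N) hn)
    have hne : (n : ℝ) ≠ 0 := by positivity
    have h2 : (‖a ^ n‖₊ : ℝ≥0∞) ≤ (r : ℝ≥0∞) ^ n := by
      have := ENNReal.rpow_le_rpow h1.le (by positivity : (0:ℝ) ≤ (n : ℝ))
      rwa [← ENNReal.rpow_mul, one_div, inv_mul_cancel₀ hne, ENNReal.rpow_one,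
        ENNReal.rpow_natCast] at this
    have h3 : ‖a ^ n‖ ≤ (r : ℝ) ^ n := by
      rw [← ENNReal.coe_pow] at h2
      exact_mod_cast ENNReal.coe_le_coe.mp h2
    exact h3.trans (pow_le_pow_left₀ (by positivity) (le_max_left _ _) n)
  set C : ℝ := 1 + ∑ n ∈ Finset.range (N + 1), ‖a ^ n‖ / r0 ^ n with hC
  have hCnn : 1 ≤ C := by
    have : 0 ≤ ∑ n ∈ Finset.range (N + 1), ‖a ^ n‖ / r0 ^ n :=
      Finset.sum_nonneg fun i _ => by positivity
    rw [hC]; linarith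
  refine ⟨C, r0, by linarith, hr0pos.le, hr0lt, fun n => ?_⟩
  rcases le_or_gt (N + 1) n with hcase | hcase
  · calc ‖a ^ n‖ ≤ r0 ^ n := key n hcase
      _ = 1 * r0 ^ n := (one_mul _).symm
      _ ≤ C * r0 ^ n := by gcongr
  · have hmem : n ∈ Finset.range (N + 1) := Finset.mem_range.mpr hcase
    have h1 : ‖a ^ n‖ / r0 ^ n ≤ C := by
      have := Finset.single_le_sum (f := fun i => ‖a ^ i‖ / r0 ^ i)
        (fun i _ => by positivity) hmem
      rw [hC]; beta_reduce at this ⊢; linarith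
    calc ‖a ^ n‖ = (‖a ^ n‖ / r0 ^ n) * r0 ^ n := by field_simp
      _ ≤ C * r0 ^ n := by gcongr

variable {d : ℕ}

local notation "H" => EuclideanSpace ℂ (Fin d)

private lemma aux_Pstar (ψ : H) (P : H →L[ℂ] H) (hP : P = (innerSL ℂ ψ).smulRight ψ) :
    star P = P := by
  rw [ContinuousLinearMap.star_eq_adjoint]
  symm
  rw [ContinuousLinearMap.eq_adjoint_iff]
  intro x y
  simp only [hP, smulRight_apply, innerSL_apply_apply, inner_smul_left, inner_smul_right]
  rw [← inner_conj_symm x ψ, mul_comm]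

private lemma aux_PP (ψ : H) (hψ : ‖ψ‖ = 1) (P : H →L[ℂ] H)
    (hP : P = (innerSL ℂ ψ).smulRight ψ) : P * P = P := by
  ext1 x
  simp only [hP, mul_apply_eq_comp, smulRight_apply, innerSL_apply_apply, inner_smul_right, smul_smul]
  have : (inner ℂ ψ ψ : ℂ) = 1 := by
    rw [inner_self_eq_norm_sq_to_K, hψ]; norm_num
  rw [this, mul_one]

private lemma aux_key (W : H →L[ℂ] H) (hW : W ∈ unitary (H →L[ℂ] H))
    (ψ : H) (hψ : ‖ψ‖ = 1) (P : H →L[ℂ] H) (hP : P = (innerSL ℂ ψ).smulRight ψ)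
    (α : ℝ) (M : H →L[ℂ] H) (hM : M = W * (1 + (((Real.cos α : ℂ)) - 1) • P)) :
    ((Real.sin α : ℂ) ^ 2) • (W * P * star W) = 1 - M * star M := by
  have hPs := aux_Pstar ψ P hP
  have hPP := aux_PP ψ hψ P hP
  have hWW : W * star W = 1 := (Unitary.mem_iff.mp hW).2
  have hBstar : star (1 + (((Real.cos α : ℂ)) - 1) • P)
      = 1 + (((Real.cos α : ℂ)) - 1) • P := by
    erw [star_add, star_one, star_smul, hPs]
    congr 1
    rw [star_sub, star_one, Complex.star_def, Complex.conj_ofReal]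
  have hcoef : ((Real.cos α : ℂ) - 1) + ((((Real.cos α : ℂ)) - 1)
      + ((Real.cos α : ℂ) - 1) * ((Real.cos α : ℂ) - 1)) = -((Real.sin α : ℂ)^2) := by
    have h : ((Real.sin α : ℂ))^2 + ((Real.cos α : ℂ))^2 = 1 := by
      exact_mod_cast congrArg (fun x : ℝ => (x : ℂ)) (Real.sin_sq_add_cos_sq α)
    linear_combination h
  have hBB : (1 + (((Real.cos α : ℂ)) - 1) • P) * (1 + (((Real.cos α : ℂ)) - 1) • P)
      = 1 - ((Real.sin α : ℂ)^2) • P := by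
    simp only [mul_add, add_mul, one_mul, mul_one, smul_mul_assoc, mul_smul_comm, smul_smul,
      smul_add, hPP]
    match_scalars <;> simp only [← Complex.ofReal_cos, ← Complex.ofReal_sin] <;>
      linear_combination hcoef
  rw [hM, star_mul, hBstar]
  have h4 : W * (1 + (((Real.cos α : ℂ)) - 1) • P)
        * ((1 + (((Real.cos α : ℂ)) - 1) • P) * star W)
      = W * (((1 + (((Real.cos α : ℂ)) - 1) • P)
        * (1 + (((Real.cos α : ℂ)) - 1) • P)) * star W) := by
    simp only [mul_assoc]
  rw [h4, hBB, sub_mul, one_mul, smul_mul_assoc, mul_sub, mul_smul_comm, hWW, sub_sub_cancel,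
    mul_assoc]

/-- The reindexing bijection `ℤ × ℕ ≃ ℕ × ℕ`, `(k, m) ↦ (m + k⁺, m + k⁻)`. -/
private def auxEquiv : ℤ × ℕ ≃ ℕ × ℕ where
  toFun q := (q.2 + q.1.toNat, q.2 + (-q.1).toNat)
  invFun p := ((p.1 : ℤ) - p.2, min p.1 p.2)
  left_inv q := by
    obtain ⟨k, m⟩ := q
    simp only [Prod.mk.injEq]
    constructor
    · push_cast; omega
    · omega
  right_inv p := by
    obtain ⟨s, t⟩ := p
    simp only [Prod.mk.injEq]
    constructor
    · omega
    · omega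

end Aux

/-- For `M = W(1 + (cos α − 1)P)` with `‖M‖ ≤ 1`, `spr M < 1`,
`P` the rank-one orthogonal projection onto a unit vector `ψ`, and hermitian,
absolutely summable coefficients `(c_k)_{k∈ℤ}`, the double series
`Σ_{s',t'≥1} c_{s'−t'} sin²α · M^{t'−1} W P W* (M*)^{s'−1}` converges absolutely
in norm and equals `c₀·1 + Σ_{ℓ≥1} c_ℓ (M*)^ℓ + Σ_{ℓ≥1} conj(c_ℓ) M^ℓ`. -/
theorem stmt5 {d : ℕ}
    (W : EuclideanSpace ℂ (Fin d) →L[ℂ] EuclideanSpace ℂ (Fin d))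
    (hW : W ∈ unitary (EuclideanSpace ℂ (Fin d) →L[ℂ] EuclideanSpace ℂ (Fin d)))
    (ψ : EuclideanSpace ℂ (Fin d)) (hψ : ‖ψ‖ = 1)
    (P : EuclideanSpace ℂ (Fin d) →L[ℂ] EuclideanSpace ℂ (Fin d))
    (hP : P = (innerSL ℂ ψ).smulRight ψ)
    (α : ℝ)
    (M : EuclideanSpace ℂ (Fin d) →L[ℂ] EuclideanSpace ℂ (Fin d))
    (hM : M = W * (1 + (((Real.cos α : ℂ)) - 1) • P))
    (hMnorm : ‖M‖ ≤ 1) (hMspr : spectralRadius ℂ M < 1)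
    (c : ℤ → ℂ) (hherm : ∀ k : ℤ, c (-k) = starRingEnd ℂ (c k))
    (hsum : Summable fun k : ℤ => ‖c k‖) :
    Summable (fun p : ℕ × ℕ =>
        ‖c ((p.1 + 1 : ℤ) - (p.2 + 1)) •
          (((Real.sin α : ℂ) ^ 2) • (M ^ p.2 * (W * P * star W) * (star M) ^ p.1))‖) ∧
      ∑' p : ℕ × ℕ, c ((p.1 + 1 : ℤ) - (p.2 + 1)) •
          (((Real.sin α : ℂ) ^ 2) • (M ^ p.2 * (W * P * star W) * (star M) ^ p.1))
        = c 0 • 1 + (∑' ℓ : ℕ, c (ℓ + 1) • (star M) ^ (ℓ + 1))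
            + ∑' ℓ : ℕ, starRingEnd ℂ (c (ℓ + 1)) • M ^ (ℓ + 1) := by
  obtain ⟨C, r, hC0, hr0, hr1, hbound⟩ := aux_decay hMspr
  set A : EuclideanSpace ℂ (Fin d) →L[ℂ] EuclideanSpace ℂ (Fin d) := 1 - M * star M with hA
  have hkey : ((Real.sin α : ℂ) ^ 2) • (W * P * star W) = A := aux_key W hW ψ hψ P hP α M hM
  have hstarpow : ∀ n : ℕ, ‖(star M) ^ n‖ = ‖M ^ n‖ := fun n => by
    rw [← star_pow, ContinuousLinearMap.star_eq_adjoint]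
    exact LinearIsometryEquiv.norm_map ContinuousLinearMap.adjoint (M ^ n)
  -- rewrite the summand
  have hfun : ∀ p : ℕ × ℕ, c ((p.1 + 1 : ℤ) - (p.2 + 1)) •
        (((Real.sin α : ℂ) ^ 2) • (M ^ p.2 * (W * P * star W) * (star M) ^ p.1))
      = c ((p.1 + 1 : ℤ) - (p.2 + 1)) • (M ^ p.2 * A * (star M) ^ p.1) := by
    intro p
    congr 1
    rw [← hkey, mul_smul_comm, smul_mul_assoc]
  -- the ℓ¹ bound for the coefficients
  set K : ℝ := ∑' k : ℤ, ‖c k‖ with hK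
  have hcK : ∀ k : ℤ, ‖c k‖ ≤ K := fun k => Summable.le_tsum hsum k fun j _ => norm_nonneg _
  have hK0 : 0 ≤ K := le_trans (norm_nonneg _) (hcK 0)
  -- the basic norm bound
  have hnorm : ∀ (k : ℤ) (s t : ℕ), ‖c k • (M ^ t * A * (star M) ^ s)‖
      ≤ (K * ‖A‖ * C * C) * (r ^ s * r ^ t) := by
    intro k s t
    have hns : ‖c k • (M ^ t * A * (star M) ^ s)‖ = ‖c k‖ * ‖M ^ t * A * (star M) ^ s‖ := by
      exact norm_smul (c k) (M ^ t * A * (star M) ^ s)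
    rw [hns]
    have h1 : ‖M ^ t * A * (star M) ^ s‖ ≤ (C * r ^ t) * ‖A‖ * (C * r ^ s) := by
      calc ‖M ^ t * A * (star M) ^ s‖ ≤ ‖M ^ t * A‖ * ‖(star M) ^ s‖ := norm_mul_le _ _
        _ ≤ ‖M ^ t‖ * ‖A‖ * ‖(star M) ^ s‖ :=
            mul_le_mul_of_nonneg_right (norm_mul_le _ _) (norm_nonneg _)
        _ ≤ (C * r ^ t) * ‖A‖ * (C * r ^ s) := by
            rw [hstarpow]
            exact mul_le_mul (mul_le_mul_of_nonneg_right (hbound t) (norm_nonneg A))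
              (hbound s) (norm_nonneg _) (by positivity)
    calc ‖c k‖ * ‖M ^ t * A * (star M) ^ s‖ ≤ K * ((C * r ^ t) * ‖A‖ * (C * r ^ s)) := by
          apply mul_le_mul (hcK k) h1 (norm_nonneg _) hK0
      _ = (K * ‖A‖ * C * C) * (r ^ s * r ^ t) := by ring
  -- the geometric comparison series
  have hgeo : Summable (fun p : ℕ × ℕ => (K * ‖A‖ * C * C) * (r ^ p.1 * r ^ p.2)) := by
    apply Summable.mul_left
    exact (summable_geometric_of_lt_one hr0 hr1).mul_of_nonneg
      (summable_geometric_of_lt_one hr0 hr1) (fun _ => by positivity) (fun _ => by positivity)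
  -- summability of the rewritten series
  have hFsummable : Summable (fun p : ℕ × ℕ =>
      c ((p.1 + 1 : ℤ) - (p.2 + 1)) • (M ^ p.2 * A * (star M) ^ p.1)) := by
    apply Summable.of_norm
    exact Summable.of_nonneg_of_le (fun p => norm_nonneg _)
      (fun p => hnorm _ p.1 p.2) hgeo
  -- summability claim of the statement
  have hnorm_summable : Summable (fun p : ℕ × ℕ =>
      ‖c ((p.1 + 1 : ℤ) - (p.2 + 1)) •
        (((Real.sin α : ℂ) ^ 2) • (M ^ p.2 * (W * P * star W) * (star M) ^ p.1))‖) := by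
    apply Summable.of_nonneg_of_le (fun p => norm_nonneg _) (fun p => ?_) hgeo
    rw [hfun p]
    exact hnorm _ p.1 p.2
  refine ⟨hnorm_summable, ?_⟩
  -- telescoping sum
  have htele : ∀ m : ℕ, M ^ m * A * (star M) ^ m
      = M ^ m * (star M) ^ m - M ^ (m + 1) * (star M) ^ (m + 1) := by
    intro m
    rw [hA, mul_sub, sub_mul, mul_one]
    congr 1
    rw [pow_succ, pow_succ']
    simp only [mul_assoc]
  have hdiag_summable : Summable (fun m : ℕ => M ^ m * A * (star M) ^ m) := by
    apply Summable.of_norm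
    apply Summable.of_nonneg_of_le (fun m => norm_nonneg _)
      (fun m => ?_) (((summable_geometric_of_lt_one (by positivity : (0:ℝ) ≤ r * r)
        (by nlinarith : r * r < 1))).mul_left (C * ‖A‖ * C))
    calc ‖M ^ m * A * (star M) ^ m‖ ≤ ‖M ^ m * A‖ * ‖(star M) ^ m‖ := norm_mul_le _ _
      _ ≤ ‖M ^ m‖ * ‖A‖ * ‖(star M) ^ m‖ :=
          mul_le_mul_of_nonneg_right (norm_mul_le _ _) (norm_nonneg _)
      _ ≤ (C * r ^ m) * ‖A‖ * (C * r ^ m) := by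
          rw [hstarpow]
          have h2 := hbound m
          exact mul_le_mul (mul_le_mul_of_nonneg_right h2 (norm_nonneg A)) h2
            (norm_nonneg _) (by positivity)
      _ = (C * ‖A‖ * C) * (r * r) ^ m := by rw [mul_pow]; ring
  have hMpow0 : Tendsto (fun N : ℕ => M ^ N * (star M) ^ N) atTop (𝓝 0) := by
    rw [tendsto_zero_iff_norm_tendsto_zero]
    have hb : ∀ N : ℕ, ‖M ^ N * (star M) ^ N‖ ≤ (C * C) * (r * r) ^ N := by
      intro N
      calc ‖M ^ N * (star M) ^ N‖ ≤ ‖M ^ N‖ * ‖(star M) ^ N‖ := norm_mul_le _ _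
        _ ≤ (C * r ^ N) * (C * r ^ N) := by
            rw [hstarpow]
            exact mul_le_mul (hbound N) (hbound N) (norm_nonneg _) (by positivity)
        _ = (C * C) * (r * r) ^ N := by rw [mul_pow]; ring
    have hg : Tendsto (fun N : ℕ => (C * C) * (r * r) ^ N) atTop (𝓝 0) := by
      simpa using (tendsto_pow_atTop_nhds_zero_of_lt_one (by positivity : (0:ℝ) ≤ r * r)
        (by nlinarith : r * r < 1)).const_mul (C * C)
    exact squeeze_zero (fun N => norm_nonneg _) hb hg
  have hgsum : HasSum (fun m : ℕ => M ^ m * A * (star M) ^ m) 1 := by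
    have h1 := hdiag_summable.hasSum.tendsto_sum_nat
    have h2 : ∀ N : ℕ, ∑ m ∈ Finset.range N, (M ^ m * A * (star M) ^ m)
        = 1 - M ^ N * (star M) ^ N := by
      intro N
      rw [Finset.sum_congr rfl (fun m _ => htele m),
        Finset.sum_range_sub' (fun i => M ^ i * (star M) ^ i)]
      simp
    simp only [h2] at h1
    have h3 : Tendsto (fun N : ℕ => 1 - M ^ N * (star M) ^ N) atTop
        (𝓝 (1 : EuclideanSpace ℂ (Fin d) →L[ℂ] EuclideanSpace ℂ (Fin d))) := by
      simpa using tendsto_const_nhds.sub hMpow0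
    have := tendsto_nhds_unique h1 h3
    exact this ▸ hdiag_summable.hasSum
  -- the fiberwise sums
  have hinner : ∀ k : ℤ, HasSum (fun m : ℕ =>
      c (((auxEquiv (k, m)).1 + 1 : ℤ) - ((auxEquiv (k, m)).2 + 1)) •
        (M ^ (auxEquiv (k, m)).2 * A * (star M) ^ (auxEquiv (k, m)).1))
      (c k • (M ^ (-k).toNat * (star M) ^ k.toNat)) := by
    intro k
    have h0 : ∀ m : ℕ, c (((auxEquiv (k, m)).1 + 1 : ℤ) - ((auxEquiv (k, m)).2 + 1)) •
        (M ^ (auxEquiv (k, m)).2 * A * (star M) ^ (auxEquiv (k, m)).1)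
        = c k • (M ^ ((-k).toNat) * (M ^ m * A * (star M) ^ m) * (star M) ^ (k.toNat)) := by
      intro m
      have e1 : (auxEquiv (k, m)).1 = m + k.toNat := rfl
      have e2 : (auxEquiv (k, m)).2 = m + (-k).toNat := rfl
      rw [e1, e2]
      congr 1
      · congr 1; push_cast; omega
      · rw [add_comm m ((-k).toNat), pow_add, pow_add]
        simp only [mul_assoc]
    rw [funext h0]
    have h1 := ((hgsum.mul_left (M ^ ((-k).toNat))).mul_right ((star M) ^ (k.toNat))).const_smul
      (c k)
    simpa using h1
  -- the outer sum over ℤ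
  have hsum_nat : Summable (fun n : ℕ => ‖c (n : ℤ)‖) :=
    hsum.comp_injective (fun a b h => by exact_mod_cast h)
  have hsum_neg : Summable (fun n : ℕ => ‖c (-(n + 1) : ℤ)‖) :=
    hsum.comp_injective (fun a b h => by omega)
  have hSpos : Summable (fun n : ℕ => c (n : ℤ) • (star M) ^ n) := by
    apply Summable.of_norm
    apply Summable.of_nonneg_of_le (fun n => norm_nonneg _) (fun n => ?_)
      (hsum_nat.mul_right C)
    have hns : ‖c (n : ℤ) • (star M) ^ n‖ = ‖c (n : ℤ)‖ * ‖(star M) ^ n‖ := by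
      exact norm_smul (c (n : ℤ)) ((star M) ^ n)
    rw [hns, hstarpow]
    have hr : r ^ n ≤ 1 := pow_le_one₀ hr0 hr1.le
    have h3 : ‖M ^ n‖ ≤ C := (hbound n).trans
      (by nlinarith [mul_nonneg hC0 (sub_nonneg.mpr hr)])
    exact mul_le_mul_of_nonneg_left h3 (norm_nonneg _)
  have hSneg : Summable (fun n : ℕ => (starRingEnd ℂ) (c ((n : ℤ) + 1)) • M ^ (n + 1)) := by
    apply Summable.of_norm
    apply Summable.of_nonneg_of_le (fun n => norm_nonneg _) (fun n => ?_)
      (hsum_neg.mul_right C)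
    have hns : ‖(starRingEnd ℂ) (c ((n : ℤ) + 1)) • M ^ (n + 1)‖
        = ‖(starRingEnd ℂ) (c ((n : ℤ) + 1))‖ * ‖M ^ (n + 1)‖ := by
      exact norm_smul ((starRingEnd ℂ) (c ((n : ℤ) + 1))) (M ^ (n + 1))
    rw [hns]
    have hcc : ‖(starRingEnd ℂ) (c ((n : ℤ) + 1))‖ = ‖c (-((n : ℕ) + 1) : ℤ)‖ := by
      rw [show (-((n : ℕ) + 1) : ℤ) = -((n : ℤ) + 1) by push_cast; ring, hherm]
    rw [hcc]
    have hr : r ^ (n + 1) ≤ 1 := pow_le_one₀ hr0 hr1.le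
    have h3 : ‖M ^ (n + 1)‖ ≤ C := (hbound (n + 1)).trans
      (by nlinarith [mul_nonneg hC0 (sub_nonneg.mpr hr)])
    exact mul_le_mul_of_nonneg_left h3 (norm_nonneg _)
  have hGpos : HasSum (fun n : ℕ => c ((n : ℤ)) • (M ^ (-(n : ℤ)).toNat * (star M) ^ (n : ℤ).toNat))
      (c 0 • 1 + ∑' ℓ : ℕ, c (ℓ + 1) • (star M) ^ (ℓ + 1)) := by
    have hfix : ∀ n : ℕ, c ((n : ℤ)) • (M ^ (-(n : ℤ)).toNat * (star M) ^ (n : ℤ).toNat)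
        = c ((n : ℤ)) • (star M) ^ n := by
      intro n
      have h1 : (-(n : ℤ)).toNat = 0 := by omega
      have h2 : ((n : ℤ)).toNat = n := by omega
      rw [h1, h2, pow_zero, one_mul]
    rw [funext hfix]
    have hval : ∑' n : ℕ, c ((n : ℤ)) • (star M) ^ n
        = c 0 • 1 + ∑' ℓ : ℕ, c (ℓ + 1) • (star M) ^ (ℓ + 1) := by
      rw [Summable.tsum_eq_zero_add hSpos]
      simp only [Nat.cast_zero, pow_zero, Nat.cast_add, Nat.cast_one]
    exact hval ▸ hSpos.hasSum
  have hGneg : HasSum (fun n : ℕ =>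
      c ((-(n + 1) : ℤ)) • (M ^ (-(-(n + 1) : ℤ)).toNat * (star M) ^ (-(n + 1) : ℤ).toNat))
      (∑' ℓ : ℕ, (starRingEnd ℂ) (c (ℓ + 1)) • M ^ (ℓ + 1)) := by
    have hfix : ∀ n : ℕ, c ((-(n + 1) : ℤ)) •
        (M ^ (-(-(n + 1) : ℤ)).toNat * (star M) ^ (-(n + 1) : ℤ).toNat)
        = (starRingEnd ℂ) (c ((n : ℤ) + 1)) • M ^ (n + 1) := by
      intro n
      have h1 : (-(-(n + 1) : ℤ)).toNat = n + 1 := by omega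
      have h2 : ((-(n + 1) : ℤ)).toNat = 0 := by omega
      rw [h1, h2, pow_zero, mul_one, show (-(n + 1) : ℤ) = -((n : ℤ) + 1) by ring, hherm]
    rw [funext hfix]
    exact hSneg.hasSum
  have houter : HasSum (fun k : ℤ => c k • (M ^ (-k).toNat * (star M) ^ k.toNat))
      ((c 0 • 1 + ∑' ℓ : ℕ, c (ℓ + 1) • (star M) ^ (ℓ + 1))
        + ∑' ℓ : ℕ, (starRingEnd ℂ) (c (ℓ + 1)) • M ^ (ℓ + 1)) :=
    HasSum.of_nat_of_neg_add_one hGpos hGneg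
  -- assemble
  have hFe : HasSum ((fun p : ℕ × ℕ =>
      c ((p.1 + 1 : ℤ) - (p.2 + 1)) • (M ^ p.2 * A * (star M) ^ p.1)) ∘ auxEquiv)
      (∑' p : ℕ × ℕ, c ((p.1 + 1 : ℤ) - (p.2 + 1)) • (M ^ p.2 * A * (star M) ^ p.1)) :=
    auxEquiv.hasSum_iff.mpr hFsummable.hasSum
  have hfib : HasSum (fun k : ℤ => c k • (M ^ (-k).toNat * (star M) ^ k.toNat))
      (∑' p : ℕ × ℕ, c ((p.1 + 1 : ℤ) - (p.2 + 1)) • (M ^ p.2 * A * (star M) ^ p.1)) :=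
    hFe.prod_fiberwise (fun k => hinner k)
  have hmain : ∑' p : ℕ × ℕ, c ((p.1 + 1 : ℤ) - (p.2 + 1)) • (M ^ p.2 * A * (star M) ^ p.1)
      = (c 0 • 1 + ∑' ℓ : ℕ, c (ℓ + 1) • (star M) ^ (ℓ + 1))
        + ∑' ℓ : ℕ, (starRingEnd ℂ) (c (ℓ + 1)) • M ^ (ℓ + 1) :=
    hfib.unique houter
  calc ∑' p : ℕ × ℕ, c ((p.1 + 1 : ℤ) - (p.2 + 1)) •
        (((Real.sin α : ℂ) ^ 2) • (M ^ p.2 * (W * P * star W) * (star M) ^ p.1))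
      = ∑' p : ℕ × ℕ, c ((p.1 + 1 : ℤ) - (p.2 + 1)) • (M ^ p.2 * A * (star M) ^ p.1) :=
        tsum_congr hfun
    _ = _ := hmain
end

section
/- Let Σ be a bounded operator on ℓ²(ℤ) ⊗ ℂ^m commuting with S ⊗ U and S ⊗ 1, with U unitary with simple spectrum and eigenvector x_i. Then for every k ∈ ℤ, Σ(δ_k ⊗ x_i) = Σ_{ℓ∈ℤ} ⟨δ₀ ⊗ x_i, Σ(S⊗U)^ℓ(δ₀ ⊗ x_i)⟩ (S*⊗U*)^ℓ (δ_k ⊗ x_i), the sum converging in ℓ²(ℤ)⊗ℂ^m. -/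
/-- The one-particle Hilbert space of the environment, `ℓ²(ℤ) ⊗ ℂ^m`. -/
noncomputable abbrev EnvSpace (m : ℕ) := lp (fun _ : ℤ => EuclideanSpace ℂ (Fin m)) 2

set_option maxHeartbeats 2000000 in
/-- For `Σ` bounded on `ℓ²(ℤ) ⊗ ℂ^m` commuting with `S ⊗ U` and
`S ⊗ 1` (with `U` unitary with simple spectrum), one has, for every `k ∈ ℤ`,
`Σ(δ_k ⊗ xᵢ) = Σ_{ℓ∈ℤ} ⟨δ₀ ⊗ xᵢ, Σ(S⊗U)^ℓ(δ₀ ⊗ xᵢ)⟩ (S*⊗U*)^ℓ (δ_k ⊗ xᵢ)`,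
the sum converging in `ℓ²(ℤ) ⊗ ℂ^m`. Here `B` encodes `S ⊗ U` (as an element of
the unitary group, so that `ℤ`-indexed powers make sense, with
`(S* ⊗ U*)^ℓ = (B⁻¹)^ℓ`) and `A` encodes `S ⊗ 1`. -/
theorem stmt9 {m : ℕ}
    (U : EuclideanSpace ℂ (Fin m) →L[ℂ] EuclideanSpace ℂ (Fin m))
    (hU : U ∈ unitary (EuclideanSpace ℂ (Fin m) →L[ℂ] EuclideanSpace ℂ (Fin m)))
    (x : Fin m → EuclideanSpace ℂ (Fin m)) (hx : Orthonormal ℂ x)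
    (γ : Fin m → ℂ) (hUx : ∀ i, U (x i) = γ i • x i) (hγ : Function.Injective γ)
    (A T : EnvSpace m →L[ℂ] EnvSpace m)
    (hA : A ∈ unitary (EnvSpace m →L[ℂ] EnvSpace m))
    (B : unitary (EnvSpace m →L[ℂ] EnvSpace m))
    (hAact : ∀ (ℓ : ℤ) (w : EuclideanSpace ℂ (Fin m)),
      A (lp.single 2 ℓ w) = lp.single 2 (ℓ - 1) w)
    (hBact : ∀ (ℓ : ℤ) (w : EuclideanSpace ℂ (Fin m)),
      (B : EnvSpace m →L[ℂ] EnvSpace m) (lp.single 2 ℓ w) = lp.single 2 (ℓ - 1) (U w))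
    (hTA : Commute T A) (hTB : Commute T (B : EnvSpace m →L[ℂ] EnvSpace m))
    (i : Fin m) (k : ℤ) :
    HasSum
      (fun ℓ : ℤ =>
        (inner (𝕜 := ℂ) (lp.single 2 (0:ℤ) (x i) : EnvSpace m)
            (T (((B ^ ℓ : unitary (EnvSpace m →L[ℂ] EnvSpace m)) :
                EnvSpace m →L[ℂ] EnvSpace m) (lp.single 2 0 (x i))))) •
          (((B⁻¹ ^ ℓ : unitary (EnvSpace m →L[ℂ] EnvSpace m)) :
              EnvSpace m →L[ℂ] EnvSpace m) (lp.single 2 k (x i))))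
      (T (lp.single 2 k (x i))) := by
  classical
  -- orthonormality facts
  have hxij : ∀ j l : Fin m, (inner (𝕜 := ℂ) (x j) (x l)) = if j = l then 1 else 0 :=
    fun j l => orthonormal_iff_ite.mp hx j l
  -- U preserves inner products
  have hUadj : ∀ a : EuclideanSpace ℂ (Fin m), (ContinuousLinearMap.adjoint U) (U a) = a := by
    intro a
    rw [← ContinuousLinearMap.star_eq_adjoint, ← ContinuousLinearMap.mul_apply, hU.1,
      ContinuousLinearMap.one_apply]
  have hUinner : ∀ a b : EuclideanSpace ℂ (Fin m), (inner (𝕜 := ℂ) (U a) (U b)) = inner (𝕜 := ℂ) a b := by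
    intro a b
    rw [← ContinuousLinearMap.adjoint_inner_left, hUadj]
  -- eigenvalues are unimodular
  have hconj : ∀ j, (starRingEnd ℂ) (γ j) * γ j = 1 := by
    intro j
    have h1 := hUinner (x j) (x j)
    rw [hUx, inner_smul_left, inner_smul_right] at h1
    have h2 : (inner (𝕜 := ℂ) (x j) (x j)) = 1 := by simpa using hxij j j
    rw [h2] at h1
    simpa [mul_assoc] using h1
  have hγ0 : ∀ j, γ j ≠ 0 := by
    intro j h
    have := hconj j
    rw [h] at this
    simp at this
  have hconjeq : ∀ j, (starRingEnd ℂ) (γ j) = (γ j)⁻¹ := fun j =>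
    eq_inv_of_mul_eq_one_left (hconj j)
  have hconjinv : ∀ j, (starRingEnd ℂ) ((γ j)⁻¹) = γ j := by
    intro j
    rw [map_inv₀, hconjeq, inv_inv]
  -- commutation with adjoints via units
  have hTAstar : T * star A = star A * T := by
    calc T * star A = (star A * A) * T * star A := by rw [hA.1, one_mul]
      _ = star A * (A * T) * star A := by rw [mul_assoc (star A)]
      _ = star A * (T * A) * star A := by rw [← hTA.eq]
      _ = star A * T * (A * star A) := by rw [mul_assoc (star A), mul_assoc, mul_assoc]
      _ = star A * T := by rw [hA.2, mul_one]
  have hTAstar_apply : ∀ u : EnvSpace m, T (star A u) = star A (T u) := by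
    intro u
    rw [← ContinuousLinearMap.mul_apply, hTAstar, ContinuousLinearMap.mul_apply]
  -- star A action on singles
  have hAstar : ∀ (q : ℤ) (w : EuclideanSpace ℂ (Fin m)), star A (lp.single 2 q w) = lp.single 2 (q + 1) w := by
    intro q w
    have h1 : A (lp.single 2 (q + 1) w) = lp.single 2 q w := by
      rw [hAact]; norm_num
    rw [← h1, ← ContinuousLinearMap.mul_apply, hA.1, ContinuousLinearMap.one_apply]
  -- the basic shift identity
  have shift1 : ∀ (p q : ℤ) (a w : EuclideanSpace ℂ (Fin m)),
      (inner (𝕜 := ℂ) (lp.single 2 p a : EnvSpace m) (T (lp.single 2 q w)))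
        = inner (𝕜 := ℂ) (lp.single 2 (p + 1) a : EnvSpace m) (T (lp.single 2 (q + 1) w)) := by
    intro p q a w
    have h1 : T (lp.single 2 (q + 1) w) = star A (T (lp.single 2 q w)) := by
      rw [← hAstar, hTAstar_apply]
    rw [h1, ContinuousLinearMap.star_eq_adjoint, ContinuousLinearMap.adjoint_inner_right,
      hAact]
    norm_num
  have shiftn : ∀ (n p q : ℤ) (a w : EuclideanSpace ℂ (Fin m)),
      (inner (𝕜 := ℂ) (lp.single 2 (p + n) a : EnvSpace m) (T (lp.single 2 (q + n) w)))
        = inner (𝕜 := ℂ) (lp.single 2 p a : EnvSpace m) (T (lp.single 2 q w)) := by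
    intro n
    induction n using Int.induction_on with
    | zero => simp
    | succ n ih =>
      intro p q a w
      have e1 : p + ((n : ℤ) + 1) = (p + n) + 1 := by ring
      have e2 : q + ((n : ℤ) + 1) = (q + n) + 1 := by ring
      rw [e1, e2, ← shift1, ih]
    | pred n ih =>
      intro p q a w
      have e1 : p + (-(n : ℤ) - 1) + 1 = p + (-(n : ℤ)) := by ring
      have e2 : q + (-(n : ℤ) - 1) + 1 = q + (-(n : ℤ)) := by ring
      have := shift1 (p + (-(n : ℤ) - 1)) (q + (-(n : ℤ) - 1)) a w
      rw [e1, e2] at this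
      rw [this, ih]
  -- B action on eigenvector singles
  have hBsingle : ∀ (j : Fin m) (q : ℤ),
      (B : EnvSpace m →L[ℂ] EnvSpace m) (lp.single 2 q (x j))
        = γ j • lp.single 2 (q - 1) (x j) := by
    intro j q
    rw [hBact, hUx, lp.single_smul]
  have hBinvB : ∀ u : EnvSpace m,
      ((B⁻¹ : unitary (EnvSpace m →L[ℂ] EnvSpace m)) : EnvSpace m →L[ℂ] EnvSpace m)
        ((B : EnvSpace m →L[ℂ] EnvSpace m) u) = u := by
    intro u
    rw [← ContinuousLinearMap.mul_apply, ← MulMemClass.coe_mul, inv_mul_cancel,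
      OneMemClass.coe_one, ContinuousLinearMap.one_apply]
  have hBinv : ∀ (j : Fin m) (q : ℤ),
      ((B⁻¹ : unitary (EnvSpace m →L[ℂ] EnvSpace m)) : EnvSpace m →L[ℂ] EnvSpace m)
        (lp.single 2 q (x j)) = (γ j)⁻¹ • lp.single 2 (q + 1) (x j) := by
    intro j q
    have h1 := hBinvB (lp.single 2 (q + 1) (x j))
    rw [hBsingle] at h1
    have e : q + 1 - 1 = q := by ring
    rw [e, map_smul] at h1
    rw [eq_inv_smul_iff₀ (hγ0 j)]
    exact h1
  -- orthogonality of off-diagonal coefficients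
  have oc : ∀ (j : Fin m), j ≠ i → ∀ (p q : ℤ),
      (inner (𝕜 := ℂ) (lp.single 2 p (x j) : EnvSpace m) (T (lp.single 2 q (x i)))) = 0 := by
    intro j hj p q
    have hTBapp : T ((B : EnvSpace m →L[ℂ] EnvSpace m) (lp.single 2 (q + 1) (x i)))
        = (B : EnvSpace m →L[ℂ] EnvSpace m) (T (lp.single 2 (q + 1) (x i))) := by
      rw [← ContinuousLinearMap.mul_apply, hTB.eq, ContinuousLinearMap.mul_apply]
    have lhs : (inner (𝕜 := ℂ) (lp.single 2 p (x j) : EnvSpace m)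
        (T ((B : EnvSpace m →L[ℂ] EnvSpace m) (lp.single 2 (q + 1) (x i)))))
        = γ i * inner (𝕜 := ℂ) (lp.single 2 p (x j) : EnvSpace m) (T (lp.single 2 q (x i))) := by
      rw [hBsingle]
      have e : q + 1 - 1 = q := by ring
      rw [e, map_smul, inner_smul_right]
    have hstarB : star ((B : EnvSpace m →L[ℂ] EnvSpace m))
        = ((B⁻¹ : unitary (EnvSpace m →L[ℂ] EnvSpace m)) : EnvSpace m →L[ℂ] EnvSpace m) := by
      rw [← Unitary.coe_star, Unitary.star_eq_inv]
    have rhs : (inner (𝕜 := ℂ) (lp.single 2 p (x j) : EnvSpace m)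
        ((B : EnvSpace m →L[ℂ] EnvSpace m) (T (lp.single 2 (q + 1) (x i)))))
        = γ j * inner (𝕜 := ℂ) (lp.single 2 (p + 1) (x j) : EnvSpace m)
            (T (lp.single 2 (q + 1) (x i))) := by
      rw [← ContinuousLinearMap.adjoint_inner_left, ← ContinuousLinearMap.star_eq_adjoint,
        hstarB, hBinv, inner_smul_left, hconjinv]
    have key : γ i * inner (𝕜 := ℂ) (lp.single 2 p (x j) : EnvSpace m) (T (lp.single 2 q (x i)))
        = γ j * inner (𝕜 := ℂ) (lp.single 2 p (x j) : EnvSpace m) (T (lp.single 2 q (x i))) := by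
      rw [← lhs, hTBapp, rhs, ← shift1]
    have hne : γ i ≠ γ j := fun h => hj (hγ h.symm)
    by_contra hc
    exact hne (mul_right_cancel₀ hc key)
  -- the vector and its components
  set v : EnvSpace m := T (lp.single 2 k (x i)) with hv
  -- span of the eigenvectors is everything
  haveI : Nonempty (Fin m) := ⟨i⟩
  have hspan : Submodule.span ℂ (Set.range x) = ⊤ := by
    have hb := (basisOfOrthonormalOfCardEqFinrank hx (by simp)).span_eq
    rwa [coe_basisOfOrthonormalOfCardEqFinrank] at hb
  -- each component of v is a multiple of x i
  have hv_split : ∀ p : ℤ, v p = (inner (𝕜 := ℂ) (x i) (v p)) • x i := by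
    intro p
    set w : EuclideanSpace ℂ (Fin m) := v p with hw
    set w' : EuclideanSpace ℂ (Fin m) := w - (inner (𝕜 := ℂ) (x i) w) • x i with hw'
    have hw'ortho : ∀ j, (inner (𝕜 := ℂ) (x j) w') = 0 := by
      intro j
      by_cases hji : j = i
      · subst hji
        have h2 : (inner (𝕜 := ℂ) (x j) (x j)) = 1 := by simpa using hxij j j
        simp [hw', inner_sub_right, inner_smul_right, h2, hx.1 j]
      · have h1 : (inner (𝕜 := ℂ) (x j) w) = 0 := by
          have h2 := oc j hji p k
          rwa [lp.inner_single_left] at h2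
        have h3 : (inner (𝕜 := ℂ) (x j) (x i)) = 0 := by simpa [hji] using hxij j i
        simp [hw', inner_sub_right, inner_smul_right, h1, h3]
    have hmem : w' ∈ Submodule.span ℂ (Set.range x) := by rw [hspan]; trivial
    have hzero : (inner (𝕜 := ℂ) w' w') = 0 := by
      refine Submodule.span_induction (p := fun u _ => (inner (𝕜 := ℂ) u w') = 0)
        ?_ ?_ ?_ ?_ hmem
      · rintro u ⟨j, rfl⟩; exact hw'ortho j
      · simp
      · intro a b _ _ ha hb; rw [inner_add_left, ha, hb, add_zero]
      · intro c a _ ha; rw [inner_smul_left, ha, mul_zero]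
    have hw'0 : w' = 0 := inner_self_eq_zero.mp hzero
    have := sub_eq_zero.mp hw'0
    simpa [hw'] using this
  -- zpow action of B on eigenvector singles
  have Bzpow : ∀ (ℓ : ℤ) (q : ℤ),
      ((B ^ ℓ : unitary (EnvSpace m →L[ℂ] EnvSpace m)) : EnvSpace m →L[ℂ] EnvSpace m)
        (lp.single 2 q (x i)) = (γ i) ^ ℓ • lp.single 2 (q - ℓ) (x i) := by
    intro ℓ
    induction ℓ using Int.induction_on with
    | zero =>
      intro q
      rw [zpow_zero, zpow_zero, OneMemClass.coe_one, ContinuousLinearMap.one_apply, one_smul,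
        sub_zero]
    | succ n ih =>
      intro q
      have e1 : B ^ ((n : ℤ) + 1) = B ^ (n : ℤ) * B := zpow_add_one B n
      rw [e1, MulMemClass.coe_mul, ContinuousLinearMap.mul_apply, hBsingle, map_smul,
        ih (q - 1)]
      rw [smul_smul]
      have e2 : γ i * γ i ^ (n : ℤ) = γ i ^ ((n : ℤ) + 1) := by
        rw [zpow_add_one₀ (hγ0 i)]; ring
      have e3 : q - 1 - (n : ℤ) = q - ((n : ℤ) + 1) := by ring
      rw [e2, e3]
    | pred n ih =>
      intro q
      have e1 : B ^ (-(n : ℤ) - 1) = B ^ (-(n : ℤ)) * B⁻¹ := zpow_sub_one B (-(n : ℤ))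
      rw [e1, MulMemClass.coe_mul, ContinuousLinearMap.mul_apply, hBinv, map_smul,
        ih (q + 1)]
      rw [smul_smul]
      have e2 : (γ i)⁻¹ * γ i ^ (-(n : ℤ)) = γ i ^ (-(n : ℤ) - 1) := by
        rw [zpow_sub_one₀ (hγ0 i)]; ring
      have e3 : q + 1 - (-(n : ℤ)) = q - (-(n : ℤ) - 1) := by ring
      rw [e2, e3]
  -- the basic sum
  have hsum0 : HasSum (fun p : ℤ => (lp.single 2 p (v p) : EnvSpace m)) v :=
    lp.hasSum_single ENNReal.ofNat_ne_top v
  have hsum1 : HasSum (fun ℓ : ℤ => (lp.single 2 (k + ℓ) (v (k + ℓ)) : EnvSpace m)) v :=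
    (Equiv.hasSum_iff (Equiv.addLeft k)).mpr hsum0
  -- identify the terms
  convert hsum1 using 2 with ℓ
  have hBl : ((B ^ ℓ : unitary (EnvSpace m →L[ℂ] EnvSpace m)) : EnvSpace m →L[ℂ] EnvSpace m)
      (lp.single 2 0 (x i)) = (γ i) ^ ℓ • lp.single 2 (-ℓ) (x i) := by
    rw [Bzpow, zero_sub]
  have hBinvl : ((B⁻¹ ^ ℓ : unitary (EnvSpace m →L[ℂ] EnvSpace m)) : EnvSpace m →L[ℂ] EnvSpace m)
      (lp.single 2 k (x i)) = (γ i) ^ (-ℓ) • lp.single 2 (k + ℓ) (x i) := by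
    rw [inv_zpow', Bzpow, sub_neg_eq_add]
  rw [hBl, hBinvl, map_smul, inner_smul_right, smul_smul]
  have hcoef : (inner (𝕜 := ℂ) (lp.single 2 (0:ℤ) (x i) : EnvSpace m)
      (T (lp.single 2 (-ℓ) (x i)))) = inner (𝕜 := ℂ) (x i) (v (k + ℓ)) := by
    have h1 := shiftn (k + ℓ) 0 (-ℓ) (x i) (x i)
    have e1 : (0 : ℤ) + (k + ℓ) = k + ℓ := by ring
    have e2 : -ℓ + (k + ℓ) = k := by ring
    rw [e1, e2] at h1
    rw [← h1, lp.inner_single_left]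
  have hγcancel : γ i ^ ℓ * (inner (𝕜 := ℂ) (lp.single 2 (0:ℤ) (x i) : EnvSpace m)
      (T (lp.single 2 (-ℓ) (x i)))) * γ i ^ (-ℓ)
      = inner (𝕜 := ℂ) (x i) (v (k + ℓ)) := by
    rw [hcoef, mul_comm, ← mul_assoc, zpow_neg, inv_mul_cancel₀ (zpow_ne_zero ℓ (hγ0 i)),
      one_mul]
  rw [hγcancel]
  rw [hv_split (k + ℓ), lp.single_smul]
  rw [← hv_split (k + ℓ)]
end
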